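/- For a soft-reset IF neuron with constant input I(t) = c for all t, where 0 ≤ c ≤ V and threshold V > 0, and any initial potential v(0) ∈ [0, V], the firing rate r(T) = (1/T)∑_{t=1}^T s(t) converges to c/V as T → ∞. -/

import Mathlib

theorem stmt_12 (V : ℝ) (hV : 0 < V) (c : ℝ) (hc : 0 ≤ c ∧ c ≤ V) (v s : ℕ → ℝ)
    (hs : ∀ t, 1 ≤ t → s t = if V < v (t - 1) + c then 1 else 0)
    (hv : ∀ t, 1 ≤ t → v t = v (t - 1) + c - s t * V)
    (hv0 : 0 ≤ v 0 ∧ v 0 ≤ V) :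
    Filter.Tendsto (fun T : ℕ => (1 / T : ℝ) * ∑ t ∈ Finset.Icc 1 T, s t)
      Filter.atTop (nhds (c / V)) := by
  obtain ⟨hc0, hcV⟩ := hc
  -- bounds on v
  have hb : ∀ t, 0 ≤ v t ∧ v t ≤ V := by
    intro t
    induction t with
    | zero => exact hv0
    | succ n ih =>
      have h1 : 1 ≤ n + 1 := Nat.le_add_left 1 n
      have hvn := hv (n + 1) h1
      have hsn := hs (n + 1) h1
      simp only [Nat.add_sub_cancel] at hvn hsn
      by_cases h : V < v n + c
      · rw [hvn, hsn, if_pos h]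
        constructor <;> nlinarith [ih.1, ih.2]
      · rw [hvn, hsn, if_neg h]
        constructor <;> nlinarith [ih.1, ih.2]
  -- telescoping sum
  have hsum : ∀ T : ℕ, (∑ t ∈ Finset.Icc 1 T, s t) * V = v 0 + T * c - v T := by
    intro T
    induction T with
    | zero => simp
    | succ n ih =>
      rw [Finset.sum_Icc_succ_top (Nat.le_add_left 1 n), add_mul, ih,
        hv (n + 1) (Nat.le_add_left 1 n)]
      push_cast
      ring
  -- rewrite the sequence
  have key : ∀ T : ℕ, 1 ≤ T →
      (1 / T : ℝ) * ∑ t ∈ Finset.Icc 1 T, s t = c / V + (v 0 - v T) / (T * V) := by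
    intro T hT
    have hT0 : (T : ℝ) ≠ 0 := Nat.cast_ne_zero.2 (by omega)
    have hVne : V ≠ 0 := ne_of_gt hV
    have hS : (∑ t ∈ Finset.Icc 1 T, s t) = (v 0 + T * c - v T) / V :=
      eq_div_iff hVne |>.2 (hsum T)
    rw [hS]
    field_simp
    ring
  have h2 : Filter.Tendsto (fun T : ℕ => c / V + (v 0 - v T) / (T * V))
      Filter.atTop (nhds (c / V)) := by
    have hz : Filter.Tendsto (fun T : ℕ => (v 0 - v T) / (T * V))
        Filter.atTop (nhds 0) := by
      refine squeeze_zero_norm (fun T => ?_) tendsto_one_div_atTop_nhds_zero_nat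
      rcases Nat.eq_zero_or_pos T with h | h
      · simp [h]
      have hT0 : (0 : ℝ) < T := by exact_mod_cast h
      rw [norm_div]
      simp only [Real.norm_eq_abs]
      have habs : |v 0 - v T| ≤ V := by
        rw [abs_le]; constructor <;> linarith [hb T |>.1, hb T |>.2, hv0.1, hv0.2]
      have habs2 : |(T : ℝ) * V| = T * V := abs_of_pos (by positivity)
      rw [habs2, div_le_div_iff₀ (by positivity) hT0, one_mul]
      calc |v 0 - v T| * T ≤ V * T := by nlinarith [abs_nonneg (v 0 - v T)]
        _ = T * V := by ring
    have := Filter.Tendsto.add (tendsto_const_nhds (x := c / V)) hz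
    simpa using this
  apply h2.congr'
  filter_upwards [Filter.eventually_ge_atTop 1] with T hT
  exact (key T hT).symm
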